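/- Let A be Hurwitz. If Q is any negative definite symmetric matrix, then the Lyapunov equation A X + X Aᵀ = Q has a unique solution X, and X is symmetric positive definite. Explicitly, X = ∫₀^∞ e^{tA}(−Q)e^{tAᵀ} dt. -/

import Mathlib

open Matrix

namespace Lyap

open NormedSpace

attribute [local instance] Matrix.linftyOpNormedAddCommGroup Matrix.linftyOpNormedRing
  Matrix.linftyOpNormedAlgebra

@[reducible] noncomputable def matTop {m n : Type*} [Fintype m] [Fintype n] {α : Type*}
    [NormedAddCommGroup α] : TopologicalSpace (Matrix m n α) :=
  PseudoMetricSpace.toUniformSpace.toTopologicalSpace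

attribute [local instance] matTop

variable {N : ℕ}

lemma entry_norm_le {𝕜 : Type*} [RCLike 𝕜] (M : Matrix (Fin N) (Fin N) 𝕜) (i j : Fin N) :
    ‖M i j‖ ≤ ‖M‖ := by
  have h1 : ‖M i j‖₊ ≤ ∑ j', ‖M i j'‖₊ :=
    Finset.single_le_sum (f := fun j' => ‖M i j'‖₊) (fun _ _ => zero_le) (Finset.mem_univ j)
  have h2 : (∑ j', ‖M i j'‖₊) ≤ ‖M‖₊ := by
    rw [Matrix.linfty_opNNNorm_def]
    exact Finset.le_sup (f := fun i => ∑ j, ‖M i j‖₊) (Finset.mem_univ i)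
  have := h1.trans h2
  simpa [← NNReal.coe_le_coe, NNReal.coe_sum] using this

lemma norm_le_sum {𝕜 : Type*} [RCLike 𝕜] (M : Matrix (Fin N) (Fin N) 𝕜) :
    ‖M‖ ≤ ∑ i, ∑ j, ‖M i j‖ := by
  have : ‖M‖₊ ≤ ∑ i, ∑ j, ‖M i j‖₊ := by
    rw [Matrix.linfty_opNNNorm_def]
    exact Finset.sup_le fun i _ =>
      Finset.single_le_sum (f := fun i => ∑ j, ‖M i j‖₊) (fun _ _ => zero_le) (Finset.mem_univ i)
  simpa [← NNReal.coe_le_coe, NNReal.coe_sum] using this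

lemma exists_eigenvector (B : Matrix (Fin N) (Fin N) ℂ) {μ : ℂ} (h : μ ∈ spectrum ℂ B) :
    ∃ v : Fin N → ℂ, v ≠ 0 ∧ B *ᵥ v = μ • v := by
  have h' : μ ∈ spectrum ℂ (Matrix.toLinAlgEquiv' B) := by
    rw [AlgEquiv.spectrum_eq]; exact h
  have he : Module.End.HasEigenvalue (Matrix.toLinAlgEquiv' B) μ :=
    Module.End.hasEigenvalue_iff_mem_spectrum.mpr h'
  obtain ⟨v, hv⟩ := Module.End.HasEigenvalue.exists_hasEigenvector he
  exact ⟨v, hv.2, by simpa [Matrix.toLinAlgEquiv'_apply] using hv.1⟩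

lemma pow_mulVec (B : Matrix (Fin N) (Fin N) ℂ) {μ : ℂ} {v : Fin N → ℂ}
    (h : B *ᵥ v = μ • v) (k : ℕ) : (B ^ k) *ᵥ v = (μ ^ k) • v := by
  induction k with
  | zero => simp
  | succ k ih =>
      rw [pow_succ, ← Matrix.mulVec_mulVec, h, Matrix.mulVec_smul, ih, smul_smul, pow_succ]
      ring_nf

lemma smul_cancel {μ ν : ℂ} {v : Fin N → ℂ} (hv : v ≠ 0) (h : μ • v = ν • v) : μ = ν := by
  obtain ⟨i, hi⟩ := Function.ne_iff.mp hv
  have := congrFun h i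
  simp only [Pi.smul_apply, smul_eq_mul] at this
  exact mul_right_cancel₀ (by simpa using hi) this

noncomputable def mulVecCLM (v : Fin N → ℂ) :
    Matrix (Fin N) (Fin N) ℂ →L[ℂ] (Fin N → ℂ) :=
  LinearMap.toContinuousLinearMap
    { toFun := fun M => M *ᵥ v
      map_add' := fun M M' => Matrix.add_mulVec M M' v
      map_smul' := fun c M => Matrix.smul_mulVec c M v }

lemma exp_mulVec (B : Matrix (Fin N) (Fin N) ℂ) {μ : ℂ} {v : Fin N → ℂ}
    (h : B *ᵥ v = μ • v) : exp B *ᵥ v = Complex.exp μ • v := by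
  have hs : Summable fun k : ℕ => ((k.factorial : ℂ))⁻¹ • B ^ k := expSeries_summable' B
  have h1 : exp B *ᵥ v = ∑' k : ℕ, ((k.factorial : ℂ))⁻¹ • ((μ ^ k) • v) := by
    rw [exp_eq_tsum ℂ]
    refine ((mulVecCLM v).map_tsum hs).trans ?_
    congr 1; funext k
    show (((k.factorial : ℂ))⁻¹ • B ^ k) *ᵥ v = _
    rw [Matrix.smul_mulVec, pow_mulVec B h]
  have h2 : Summable fun k : ℕ => ((k.factorial : ℂ))⁻¹ • (μ ^ k) := expSeries_summable' μ
  rw [h1]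
  have h3 : ∀ k : ℕ, ((k.factorial : ℂ))⁻¹ • ((μ ^ k) • v)
      = (((k.factorial : ℂ))⁻¹ • (μ ^ k)) • v := by
    intro k; rw [smul_smul]; rfl
  simp_rw [h3]
  rw [Summable.tsum_smul_const h2]
  congr 1
  simp only [Complex.exp_eq_exp_ℂ, exp_eq_tsum ℂ]

lemma aeval_mulVec (B : Matrix (Fin N) (Fin N) ℂ) {μ : ℂ} {v : Fin N → ℂ}
    (h : B *ᵥ v = μ • v) (p : Polynomial ℂ) :
    (Polynomial.aeval B p) *ᵥ v = (p.eval μ) • v := by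
  rw [Polynomial.aeval_eq_sum_range, Polynomial.eval_eq_sum_range]
  show mulVecCLM v (∑ i ∈ Finset.range (p.natDegree + 1), p.coeff i • B ^ i) = _
  rw [map_sum]
  show (∑ i ∈ Finset.range (p.natDegree + 1), (p.coeff i • B ^ i) *ᵥ v) = _
  simp_rw [Matrix.smul_mulVec, pow_mulVec B h, smul_smul, Finset.sum_smul]

lemma exp_mem_adjoin (B : Matrix (Fin N) (Fin N) ℂ) :
    exp B ∈ Algebra.adjoin ℂ {B} := by
  set S := Algebra.adjoin ℂ {B}
  have hclosed : IsClosed (S.toSubmodule : Set (Matrix (Fin N) (Fin N) ℂ)) :=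
    Submodule.closed_of_finiteDimensional _
  have hsum : HasSum (fun k : ℕ => ((k.factorial : ℂ))⁻¹ • B ^ k) (exp B) := by
    rw [exp_eq_tsum ℂ]
    exact (expSeries_summable' B).hasSum
  have hmem : ∀ k : ℕ, ((k.factorial : ℂ))⁻¹ • B ^ k ∈ S.toSubmodule := fun k =>
    Submodule.smul_mem _ _ (Subalgebra.pow_mem S (Algebra.self_mem_adjoin_singleton ℂ B) k)
  have := hclosed.mem_of_tendsto hsum.tendsto_sum_nat
    (Filter.Eventually.of_forall fun n => Submodule.sum_mem _ fun k _ => hmem k)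
  exact this

lemma spectrum_exp_subset (hN : 0 < N) (B : Matrix (Fin N) (Fin N) ℂ) :
    ∀ μ ∈ spectrum ℂ (exp B), ∃ ν ∈ spectrum ℂ B, μ = Complex.exp ν := by
  haveI : Nonempty (Fin N) := Fin.pos_iff_nonempty.mp hN
  haveI : Nontrivial (Matrix (Fin N) (Fin N) ℂ) := Matrix.nonempty
  intro μ hμ
  obtain ⟨p, hp⟩ : ∃ p : Polynomial ℂ, Polynomial.aeval B p = exp B := by
    have := exp_mem_adjoin B
    rw [Algebra.adjoin_singleton_eq_range_aeval] at this
    exact this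
  rw [← hp, spectrum.map_polynomial_aeval_of_nonempty B p (spectrum.nonempty B)] at hμ
  obtain ⟨ν, hν, hev⟩ := hμ
  refine ⟨ν, hν, ?_⟩
  obtain ⟨v, hv0, hv⟩ := exists_eigenvector B hν
  have h1 : (Polynomial.aeval B p) *ᵥ v = (p.eval ν) • v := aeval_mulVec B hv p
  have h2 : (Polynomial.aeval B p) *ᵥ v = Complex.exp ν • v := by
    rw [hp]; exact exp_mulVec B hv
  have := smul_cancel hv0 (h1.symm.trans h2)
  rw [← hev, ← this]

lemma exists_pow_bound (E : Matrix (Fin N) (Fin N) ℂ) (hsr : spectralRadius ℂ E < 1) :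
    ∃ C : ℝ, 0 < C ∧ ∀ k : ℕ, ‖E ^ k‖ ≤ C := by
  have htend := spectrum.pow_nnnorm_pow_one_div_tendsto_nhds_spectralRadius E
  have hev : ∀ᶠ k : ℕ in Filter.atTop, (‖E ^ k‖₊ : ENNReal) ^ (1 / (k : ℝ)) < 1 :=
    htend.eventually_lt_const hsr
  have hev2 : ∀ᶠ k : ℕ in Filter.atTop, ‖E ^ k‖ ≤ 1 := by
    filter_upwards [hev, Filter.eventually_ge_atTop 1] with k hk hk1
    by_contra hc
    push_neg at hc
    have h1 : (1 : ENNReal) < (‖E ^ k‖₊ : ENNReal) := by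
      rw [← ENNReal.coe_one, ENNReal.coe_lt_coe, ← NNReal.coe_lt_coe]
      simpa using hc
    have hpos : (0 : ℝ) < 1 / (k : ℝ) := by positivity
    have := ENNReal.one_lt_rpow h1 hpos
    exact absurd (this.trans hk) (lt_irrefl _)
  obtain ⟨K, hK⟩ := Filter.eventually_atTop.mp hev2
  refine ⟨1 + ∑ i ∈ Finset.range K, ‖E ^ i‖, by positivity, fun k => ?_⟩
  rcases lt_or_ge k K with h | h
  · have : ‖E ^ k‖ ≤ ∑ i ∈ Finset.range K, ‖E ^ i‖ :=
      Finset.single_le_sum (f := fun i => ‖E ^ i‖) (fun _ _ => norm_nonneg _)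
        (Finset.mem_range.mpr h)
    linarith
  · have h1 := hK k h
    have : (0:ℝ) ≤ ∑ i ∈ Finset.range K, ‖E ^ i‖ :=
      Finset.sum_nonneg fun _ _ => norm_nonneg _
    linarith

lemma complex_decay (hN : 0 < N) (B : Matrix (Fin N) (Fin N) ℂ)
    (hB : ∀ μ ∈ spectrum ℂ B, μ.re < 0) :
    ∃ C l : ℝ, 0 < C ∧ 0 < l ∧ ∀ t : ℝ, 0 ≤ t →
      ‖exp ((t : ℂ) • B)‖ ≤ C * Real.exp (-l * t) := by
  haveI : Nonempty (Fin N) := Fin.pos_iff_nonempty.mp hN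
  haveI : Nontrivial (Matrix (Fin N) (Fin N) ℂ) := Matrix.nonempty
  -- maximal real part
  obtain ⟨ν₀, hν₀, hmax⟩ := (spectrum.isCompact B).exists_isMaxOn (spectrum.nonempty B)
    (Complex.continuous_re.continuousOn)
  set δ : ℝ := -ν₀.re with hδ
  have hδpos : 0 < δ := by simpa [hδ] using hB ν₀ hν₀
  -- shifted matrix
  set B' : Matrix (Fin N) (Fin N) ℂ := algebraMap ℂ _ ((δ/2 : ℝ) : ℂ) + B with hB'
  have hspec' : ∀ μ ∈ spectrum ℂ B', μ.re ≤ -δ/2 := by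
    intro μ hμ
    rw [← spectrum.singleton_add_eq] at hμ
    obtain ⟨x, hx, y, hy, rfl⟩ := Set.mem_add.mp hμ
    rw [Set.mem_singleton_iff] at hx
    subst hx
    have := hmax hy
    simp only [Complex.add_re, Complex.ofReal_re] at *
    have : y.re ≤ ν₀.re := this
    simp [hδ] at *
    linarith
  -- spectral radius of exp B' < 1
  have hsr : spectralRadius ℂ (exp B') < 1 := by
    refine spectrum.spectralRadius_lt_of_forall_lt (exp B') (r := 1) fun z hz => ?_
    obtain ⟨ν, hν, rfl⟩ := spectrum_exp_subset hN B' z hz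
    have h1 : ‖Complex.exp ν‖₊ = Real.toNNReal (Real.exp ν.re) := by
      ext
      simp [Complex.norm_exp, Real.coe_toNNReal', le_of_lt (Real.exp_pos _)]
    rw [h1, ← Real.toNNReal_one]
    refine Real.toNNReal_lt_toNNReal_iff'.mpr ⟨?_, one_pos⟩
    rw [show (1:ℝ) = Real.exp 0 by simp]
    exact Real.exp_lt_exp.mpr (lt_of_le_of_lt (hspec' ν hν) (by linarith))
  obtain ⟨C₀, hC₀, hpowbd⟩ := exists_pow_bound (exp B') hsr
  -- bound on [0,1]
  obtain ⟨M, hM⟩ := (isCompact_Icc (a := (0:ℝ)) (b := 1)).exists_bound_of_continuousOn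
    (f := fun s : ℝ => exp ((s:ℂ) • B')) (by
      refine Continuous.continuousOn ?_
      exact exp_continuous.comp (by continuity))
  have hMpos : 0 < max M 1 := lt_of_lt_of_le one_pos (le_max_right _ _)
  -- bound for all t ≥ 0 of ‖exp (t • B')‖
  have hbd' : ∀ t : ℝ, 0 ≤ t → ‖exp ((t:ℂ) • B')‖ ≤ C₀ * max M 1 := by
    intro t ht
    set k : ℕ := ⌊t⌋₊
    set s : ℝ := t - k
    have hs0 : 0 ≤ s := by
      have := Nat.floor_le ht
      simp [s]; linarith
    have hs1 : s ≤ 1 := by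
      have := Nat.lt_floor_add_one t
      simp [s]; linarith
    have hsplit : (t:ℂ) • B' = (k:ℕ) • B' + (s:ℂ) • B' := by
      have : (t:ℂ) = ((k:ℝ):ℂ) + (s:ℂ) := by
        push_cast; simp [s]
      rw [this, add_smul]
      congr 1
      rw [← Nat.cast_smul_eq_nsmul ℂ]
      norm_num
    have hcomm : Commute ((k:ℕ) • B') ((s:ℂ) • B') := by
      apply Commute.smul_left; apply Commute.smul_right; exact Commute.refl B'
    calc ‖exp ((t:ℂ) • B')‖ = ‖exp ((k:ℕ) • B') * exp ((s:ℂ) • B')‖ := by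
          rw [hsplit, exp_add_of_commute hcomm]
      _ ≤ ‖exp ((k:ℕ) • B')‖ * ‖exp ((s:ℂ) • B')‖ := norm_mul_le _ _
      _ ≤ C₀ * max M 1 := by
          apply mul_le_mul
          · rw [NormedSpace.exp_nsmul]; exact hpowbd k
          · exact le_trans (hM s ⟨hs0, hs1⟩) (le_max_left _ _)
          · exact norm_nonneg _
          · exact le_of_lt hC₀
  -- transfer to B
  refine ⟨C₀ * max M 1, δ/2, by positivity, by positivity, fun t ht => ?_⟩
  have hsplit2 : (t:ℂ) • B' = algebraMap ℂ _ (((t * (δ/2) : ℝ)) : ℂ) + (t:ℂ) • B := by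
    rw [hB', smul_add]
    congr 1
    rw [Algebra.algebraMap_eq_smul_one, Algebra.algebraMap_eq_smul_one, smul_smul]
    push_cast
    ring_nf
  have hcomm2 : Commute (algebraMap ℂ (Matrix (Fin N) (Fin N) ℂ) (((t * (δ/2) : ℝ)) : ℂ))
      ((t:ℂ) • B) := Algebra.commute_algebraMap_left _ _
  have hexp2 : exp ((t:ℂ) • B') =
      Complex.exp ((t * (δ/2) : ℝ) : ℂ) • exp ((t:ℂ) • B) := by
    rw [hsplit2, exp_add_of_commute hcomm2, ← algebraMap_exp_comm,
      Algebra.algebraMap_eq_smul_one, smul_mul_assoc, one_mul, Complex.exp_eq_exp_ℂ]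
  have hnorm : ‖exp ((t:ℂ) • B')‖ = Real.exp (t * (δ/2)) * ‖exp ((t:ℂ) • B)‖ := by
    rw [hexp2, norm_smul]
    congr 1
    rw [Complex.norm_exp]
    norm_num
  have hb := hbd' t ht
  rw [hnorm] at hb
  have hexppos : (0:ℝ) < Real.exp (t * (δ/2)) := Real.exp_pos _
  have he : Real.exp (-(δ/2) * t) = (Real.exp (t * (δ/2)))⁻¹ := by
    rw [← Real.exp_neg]; ring_nf
  rw [he, mul_comm (C₀ * max M 1), ← div_eq_inv_mul, le_div_iff₀ hexppos]
  linarith [hb]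

lemma spectrum_transpose (M : Matrix (Fin N) (Fin N) ℂ) :
    spectrum ℂ Mᵀ = spectrum ℂ M := by
  ext μ
  rw [spectrum.mem_iff, spectrum.mem_iff]
  have h : algebraMap ℂ (Matrix (Fin N) (Fin N) ℂ) μ - Mᵀ
      = (algebraMap ℂ (Matrix (Fin N) (Fin N) ℂ) μ - M)ᵀ := by
    rw [Matrix.transpose_sub, Algebra.algebraMap_eq_smul_one,
      Matrix.transpose_smul, Matrix.transpose_one]
  rw [h, Matrix.isUnit_iff_isUnit_det, Matrix.det_transpose, ← Matrix.isUnit_iff_isUnit_det]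

lemma real_decay (hN : 0 < N) (A : Matrix (Fin N) (Fin N) ℝ)
    (hA : ∀ μ ∈ spectrum ℂ (A.map (algebraMap ℝ ℂ)), μ.re < 0) :
    ∃ C l : ℝ, 0 < C ∧ 0 < l ∧ ∀ t : ℝ, 0 ≤ t →
      ‖exp (t • A)‖ ≤ C * Real.exp (-l * t) := by
  obtain ⟨C, l, hC, hl, hbd⟩ := complex_decay hN (A.map (algebraMap ℝ ℂ)) hA
  set F : Matrix (Fin N) (Fin N) ℝ →+* Matrix (Fin N) (Fin N) ℂ :=
    (algebraMap ℝ ℂ).mapMatrix with hF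
  have hFcont : Continuous F := by
    show Continuous fun M : Matrix (Fin N) (Fin N) ℝ => M.map (algebraMap ℝ ℂ)
    exact Continuous.matrix_map continuous_id Complex.continuous_ofReal
  have key : ∀ t : ℝ, 0 ≤ t → ∀ i j, ‖(exp (t • A)) i j‖ ≤ C * Real.exp (-l * t) := by
    intro t ht i j
    have h1 : F (exp (t • A)) = exp (F (t • A)) := NormedSpace.map_exp F hFcont _
    have h2 : F (t • A) = (t : ℂ) • A.map (algebraMap ℝ ℂ) := by
      ext i j
      simp [hF, RingHom.mapMatrix_apply, Matrix.map_apply]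
    have h3 : exp ((t : ℂ) • A.map (algebraMap ℝ ℂ)) = exp ((t : ℂ) • A.map (algebraMap ℝ ℂ)) := by
      rfl
    have h4 : ‖(exp (t • A)) i j‖ = ‖(F (exp (t • A))) i j‖ := by
      rw [hF]
      simp [RingHom.mapMatrix_apply, Matrix.map_apply]
    rw [h4, h1, h2, h3]
    exact le_trans (entry_norm_le _ i j) (hbd t ht)
  refine ⟨(N:ℝ)^2 * C, l, by positivity, hl, fun t ht => ?_⟩
  calc ‖exp (t • A)‖ ≤ ∑ i, ∑ j, ‖(exp (t • A)) i j‖ := norm_le_sum _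
    _ ≤ ∑ _i : Fin N, ∑ _j : Fin N, C * Real.exp (-l * t) := by
        refine Finset.sum_le_sum fun i _ => Finset.sum_le_sum fun j _ => key t ht i j
    _ = (N:ℝ)^2 * C * Real.exp (-l * t) := by
        simp [Finset.sum_const, Finset.card_univ]
        ring

section Main

variable {N : ℕ}

lemma main_aux (hN : 0 < N) (A Q : Matrix (Fin N) (Fin N) ℝ)
    (hA : ∀ μ ∈ spectrum ℂ (A.map (algebraMap ℝ ℂ)), μ.re < 0)
    (hQ : (-Q).PosDef) :
    ∃ X : Matrix (Fin N) (Fin N) ℝ, (A * X + X * Aᵀ = Q) ∧ X.IsSymm ∧ X.PosDef ∧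
      (∀ i j, X i j = ∫ t in Set.Ioi (0:ℝ),
        (exp (t • A) * (-Q) * exp (t • Aᵀ)) i j) ∧
      (∀ Y : Matrix (Fin N) (Fin N) ℝ, A * Y + Y * Aᵀ = Q → Y = X) := by
  haveI : Nonempty (Fin N) := Fin.pos_iff_nonempty.mp hN
  obtain ⟨C₁, l₁, hC₁, hl₁, hd₁⟩ := real_decay hN A hA
  have hAT : ∀ μ ∈ spectrum ℂ ((Aᵀ).map (algebraMap ℝ ℂ)), μ.re < 0 := by
    intro μ hμ; apply hA; rwa [Matrix.transpose_map, spectrum_transpose] at hμ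
  obtain ⟨C₂, l₂, hC₂, hl₂, hd₂⟩ := real_decay hN Aᵀ hAT
  set l := min l₁ l₂ with hldef
  have hl : 0 < l := lt_min hl₁ hl₂
  have hd₁' : ∀ t : ℝ, 0 ≤ t → ‖exp (t • A)‖ ≤ C₁ * Real.exp (-l * t) := by
    intro t ht
    refine (hd₁ t ht).trans ?_
    have : -l₁ * t ≤ -l * t :=
      mul_le_mul_of_nonneg_right (neg_le_neg (min_le_left _ _)) ht
    exact mul_le_mul_of_nonneg_left (Real.exp_le_exp.mpr this) (le_of_lt hC₁)
  have hd₂' : ∀ t : ℝ, 0 ≤ t → ‖exp (t • Aᵀ)‖ ≤ C₂ := by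
    intro t ht
    refine (hd₂ t ht).trans ?_
    have h1 : Real.exp (-l₂ * t) ≤ 1 := by
      rw [Real.exp_le_one_iff]
      nlinarith
    nlinarith
  -- general bound
  have hbd3 : ∀ (B : Matrix (Fin N) (Fin N) ℝ) (t : ℝ), 0 ≤ t →
      ‖exp (t • A) * B * exp (t • Aᵀ)‖ ≤ C₁ * ‖B‖ * C₂ * Real.exp (-l * t) := by
    intro B t ht
    have h1 : ‖exp (t • A) * B * exp (t • Aᵀ)‖
        ≤ ‖exp (t • A)‖ * ‖B‖ * ‖exp (t • Aᵀ)‖ := by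
      refine (norm_mul_le _ _).trans ?_
      exact mul_le_mul_of_nonneg_right (norm_mul_le _ _) (norm_nonneg _)
    refine h1.trans ?_
    have e1 := hd₁' t ht
    have e2 := hd₂' t ht
    have hexp : (0:ℝ) < Real.exp (-l * t) := Real.exp_pos _
    have hBn : (0:ℝ) ≤ ‖B‖ := norm_nonneg _
    have hen : (0:ℝ) ≤ ‖exp (t • A)‖ := norm_nonneg _
    have hen2 : (0:ℝ) ≤ ‖exp (t • Aᵀ)‖ := norm_nonneg _
    calc ‖exp (t • A)‖ * ‖B‖ * ‖exp (t • Aᵀ)‖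
        ≤ (C₁ * Real.exp (-l * t)) * ‖B‖ * C₂ := by
          apply mul_le_mul
          · exact mul_le_mul_of_nonneg_right e1 hBn
          · exact e2
          · exact hen2
          · positivity
      _ = C₁ * ‖B‖ * C₂ * Real.exp (-l * t) := by ring
  set g : ℝ → Matrix (Fin N) (Fin N) ℝ :=
    fun t => exp (t • A) * (-Q) * exp (t • Aᵀ) with hgdef
  set K : ℝ := C₁ * ‖(-Q : Matrix (Fin N) (Fin N) ℝ)‖ * C₂ with hKdef
  have hgbd : ∀ t : ℝ, 0 ≤ t → ‖g t‖ ≤ K * Real.exp (-l * t) := fun t ht => hbd3 (-Q) t ht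
  have hexpAcont : Continuous fun t : ℝ => exp (t • A) :=
    exp_continuous.comp (continuous_id.smul continuous_const)
  have hexpATcont : Continuous fun t : ℝ => exp (t • Aᵀ) :=
    exp_continuous.comp (continuous_id.smul continuous_const)
  have hgcont : Continuous g := (hexpAcont.mul continuous_const).mul hexpATcont
  have hgint : MeasureTheory.IntegrableOn g (Set.Ioi (0:ℝ)) := by
    refine MeasureTheory.Integrable.mono' ((exp_neg_integrableOn_Ioi 0 hl).const_mul K)
      hgcont.aestronglyMeasurable ?_
    rw [MeasureTheory.ae_restrict_iff' measurableSet_Ioi]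
    exact MeasureTheory.ae_of_all _ fun t ht => hgbd t (le_of_lt ht)
  have hderiv : ∀ t : ℝ, HasDerivAt g (A * g t + g t * Aᵀ) t := by
    intro t
    have hu := hasDerivAt_exp_smul_const' (𝕂 := ℝ) A t
    have hv := hasDerivAt_exp_smul_const (𝕂 := ℝ) Aᵀ t
    have h1 := (hu.mul_const (-Q)).mul hv
    convert h1 using 1
    · rfl
    · rfl
    · rfl
    simp only [hgdef]
    noncomm_ring
  have htendsg : Filter.Tendsto g Filter.atTop (nhds 0) := by
    have h0 : Filter.Tendsto (fun t : ℝ => Real.exp (-l * t)) Filter.atTop (nhds 0) := by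
      have h1 : Filter.Tendsto (fun t : ℝ => l * t) Filter.atTop Filter.atTop :=
        Filter.Tendsto.const_mul_atTop hl Filter.tendsto_id
      have := Real.tendsto_exp_neg_atTop_nhds_zero.comp h1
      refine this.congr fun t => ?_
      simp [Function.comp]
    have h2 : Filter.Tendsto (fun t : ℝ => K * Real.exp (-l * t)) Filter.atTop (nhds 0) := by
      simpa using h0.const_mul K
    exact squeeze_zero_norm' (by
      filter_upwards [Filter.eventually_ge_atTop (0:ℝ)] with t ht
      exact hgbd t ht) h2
  -- CLMs for left/right multiplication
  set Lm : Matrix (Fin N) (Fin N) ℝ →L[ℝ] Matrix (Fin N) (Fin N) ℝ :=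
    LinearMap.toContinuousLinearMap (LinearMap.mulLeft ℝ A) with hLm
  set Rm : Matrix (Fin N) (Fin N) ℝ →L[ℝ] Matrix (Fin N) (Fin N) ℝ :=
    LinearMap.toContinuousLinearMap (LinearMap.mulRight ℝ Aᵀ) with hRm
  have hint1 : MeasureTheory.IntegrableOn (fun t => A * g t) (Set.Ioi (0:ℝ)) :=
    Lm.integrable_comp hgint
  have hint2 : MeasureTheory.IntegrableOn (fun t => g t * Aᵀ) (Set.Ioi (0:ℝ)) :=
    Rm.integrable_comp hgint
  set X₀ : Matrix (Fin N) (Fin N) ℝ := ∫ t in Set.Ioi (0:ℝ), g t with hX₀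
  have hg0 : g 0 = -Q := by
    simp [hgdef, NormedSpace.exp_zero]
  have hFTC : (∫ t in Set.Ioi (0:ℝ), (A * g t + g t * Aᵀ)) = 0 - g 0 :=
    MeasureTheory.integral_Ioi_of_hasDerivAt_of_tendsto hgcont.continuousWithinAt
      (fun x _ => hderiv x) (by exact (hint1.add hint2).congr (by
        refine MeasureTheory.ae_of_all _ fun t => rfl)) htendsg
  have heq : A * X₀ + X₀ * Aᵀ = Q := by
    have h1 : A * X₀ = ∫ t in Set.Ioi (0:ℝ), A * g t := by
      show Lm X₀ = _
      rw [hX₀, ← ContinuousLinearMap.integral_comp_comm Lm hgint]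
      rfl
    have h2 : X₀ * Aᵀ = ∫ t in Set.Ioi (0:ℝ), g t * Aᵀ := by
      show Rm X₀ = _
      rw [hX₀, ← ContinuousLinearMap.integral_comp_comm Rm hgint]
      rfl
    rw [h1, h2, ← MeasureTheory.integral_add hint1 hint2, hFTC, hg0]
    simp
  -- uniqueness of solutions
  have hzero : ∀ Z : Matrix (Fin N) (Fin N) ℝ, A * Z + Z * Aᵀ = 0 → Z = 0 := by
    intro Z hZ
    set h : ℝ → Matrix (Fin N) (Fin N) ℝ :=
      fun t => exp (t • A) * Z * exp (t • Aᵀ) with hhdef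
    have hder : ∀ t : ℝ, HasDerivAt h 0 t := by
      intro t
      have hu := hasDerivAt_exp_smul_const' (𝕂 := ℝ) A t
      have hv := hasDerivAt_exp_smul_const (𝕂 := ℝ) Aᵀ t
      have h1 := (hu.mul_const Z).mul hv
      convert h1 using 1
      · rfl
      · rfl
      · rfl
      have hc1 : A * exp (t • A) = exp (t • A) * A :=
        (Commute.exp_left ((Commute.refl A).smul_left t)).eq.symm
      have hc2 : exp (t • Aᵀ) * Aᵀ = Aᵀ * exp (t • Aᵀ) :=
        (Commute.exp_left ((Commute.refl Aᵀ).smul_left t)).eq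
      calc (0 : Matrix (Fin N) (Fin N) ℝ)
          = exp (t • A) * (A * Z + Z * Aᵀ) * exp (t • Aᵀ) := by rw [hZ]; simp
        _ = A * exp (t • A) * Z * exp (t • Aᵀ)
            + exp (t • A) * Z * (exp (t • Aᵀ) * Aᵀ) := by
            rw [hc1, hc2]; noncomm_ring
    have hconst : ∀ t : ℝ, h t = h 0 := fun t =>
      is_const_of_deriv_eq_zero (fun x => (hder x).differentiableAt)
        (fun x => (hder x).deriv) t 0
    have htendh : Filter.Tendsto h Filter.atTop (nhds 0) := by
      have h0 : Filter.Tendsto (fun t : ℝ => Real.exp (-l * t)) Filter.atTop (nhds 0) := by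
        have h1 : Filter.Tendsto (fun t : ℝ => l * t) Filter.atTop Filter.atTop :=
          Filter.Tendsto.const_mul_atTop hl Filter.tendsto_id
        have := Real.tendsto_exp_neg_atTop_nhds_zero.comp h1
        refine this.congr fun t => ?_
        simp [Function.comp]
      have h2 : Filter.Tendsto (fun t : ℝ => (C₁ * ‖Z‖ * C₂) * Real.exp (-l * t))
          Filter.atTop (nhds 0) := by simpa using h0.const_mul (C₁ * ‖Z‖ * C₂)
      exact squeeze_zero_norm' (by
        filter_upwards [Filter.eventually_ge_atTop (0:ℝ)] with t ht
        exact hbd3 Z t ht) h2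
    have hconst' : Filter.Tendsto h Filter.atTop (nhds (h 0)) := by
      rw [show h = fun _ => h 0 from funext hconst]
      exact tendsto_const_nhds
    have hz0 : h 0 = 0 := tendsto_nhds_unique hconst' htendh
    simpa [hhdef, NormedSpace.exp_zero] using hz0
  -- entries
  have hentry : ∀ i j, X₀ i j = ∫ t in Set.Ioi (0:ℝ), g t i j := by
    intro i j
    set E : Matrix (Fin N) (Fin N) ℝ →L[ℝ] ℝ :=
      LinearMap.toContinuousLinearMap
        { toFun := fun M : Matrix (Fin N) (Fin N) ℝ => M i j
          map_add' := fun M M' => rfl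
          map_smul' := fun c M => rfl } with hE
    show E X₀ = _
    rw [hX₀, ← ContinuousLinearMap.integral_comp_comm E hgint]
    rfl
  have hQsymm : (-Q)ᵀ = (-Q) := by
    have := hQ.1
    rwa [Matrix.IsHermitian, Matrix.conjTranspose_eq_transpose_of_trivial] at this
  have hT : ∀ t : ℝ, exp (t • Aᵀ) = (exp (t • A))ᵀ := by
    intro t
    rw [show t • Aᵀ = (t • A)ᵀ from (Matrix.transpose_smul t A).symm]
    exact Matrix.exp_transpose _
  have hgsymm : ∀ t : ℝ, (g t)ᵀ = g t := by
    intro t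
    simp only [hgdef, hT, Matrix.transpose_mul, Matrix.transpose_transpose, hQsymm,
      Matrix.mul_assoc]
  have hsymm : X₀.IsSymm := by
    set T : Matrix (Fin N) (Fin N) ℝ →L[ℝ] Matrix (Fin N) (Fin N) ℝ :=
      LinearMap.toContinuousLinearMap
        { toFun := fun M : Matrix (Fin N) (Fin N) ℝ => Mᵀ
          map_add' := fun M M' => Matrix.transpose_add M M'
          map_smul' := fun c M => Matrix.transpose_smul c M } with hTT
    have h1 : X₀ᵀ = ∫ t in Set.Ioi (0:ℝ), (g t)ᵀ := by
      show T X₀ = _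
      rw [hX₀, ← ContinuousLinearMap.integral_comp_comm T hgint]
      rfl
    show X₀ᵀ = X₀
    rw [h1, hX₀]
    simp only [hgsymm]
  have hpos : X₀.PosDef := by
    refine Matrix.PosDef.of_dotProduct_mulVec_pos ?_ ?_
    · show X₀ᴴ = X₀
      rw [Matrix.conjTranspose_eq_transpose_of_trivial]
      exact hsymm
    · intro x hx
      set q : ℝ → ℝ := fun t => dotProduct x (g t *ᵥ x) with hqdef
      set E : Matrix (Fin N) (Fin N) ℝ →L[ℝ] ℝ :=
        LinearMap.toContinuousLinearMap
          { toFun := fun M : Matrix (Fin N) (Fin N) ℝ => dotProduct x (M *ᵥ x)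
            map_add' := fun M M' => by
              simp [Matrix.add_mulVec, dotProduct_add]
            map_smul' := fun c M => by
              simp [Matrix.smul_mulVec, dotProduct_smul] } with hE
      have hEq : dotProduct (star x) (X₀ *ᵥ x) = ∫ t in Set.Ioi (0:ℝ), q t := by
        rw [star_trivial]
        show E X₀ = _
        rw [hX₀, ← ContinuousLinearMap.integral_comp_comm E hgint]
        rfl
      have hqint : MeasureTheory.IntegrableOn q (Set.Ioi (0:ℝ)) := E.integrable_comp hgint
      have hqpos : ∀ t : ℝ, 0 < q t := by
        intro t
        set y : Fin N → ℝ := x ᵥ* exp (t • A) with hy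
        have hy0 : y ≠ 0 := by
          intro hy0
          apply hx
          have hinj : Function.Injective (Matrix.vecMul · (exp (t • A))) :=
            Matrix.vecMul_injective_iff_isUnit.mpr (Matrix.isUnit_exp (t • A))
          apply hinj
          show x ᵥ* exp (t • A) = (0 : Fin N → ℝ) ᵥ* exp (t • A)
          rw [← hy, hy0, Matrix.zero_vecMul]
        have hq : q t = dotProduct y ((-Q) *ᵥ y) := by
          simp only [hqdef, hgdef, hT, Matrix.mul_assoc, ← Matrix.mulVec_mulVec,
            Matrix.dotProduct_mulVec, Matrix.mulVec_transpose, hy]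
        have := hQ.dotProduct_mulVec_pos hy0
        rw [star_trivial] at this
        rw [hq]
        exact this
      have hq0 : 0 < ∫ t in Set.Ioi (0:ℝ), q t := by
        refine (MeasureTheory.setIntegral_pos_iff_support_of_nonneg_ae
          (MeasureTheory.ae_of_all _ fun t => le_of_lt (hqpos t)) hqint).mpr ?_
        have hsupp : Function.support q = Set.univ :=
          Set.eq_univ_iff_forall.mpr fun t => ne_of_gt (hqpos t)
        rw [hsupp]
        simp [Real.volume_Ioi]
      rw [hEq]
      exact hq0
  refine ⟨X₀, heq, hsymm, hpos, hentry, fun Y hY => ?_⟩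
  have hdiff : A * (Y - X₀) + (Y - X₀) * Aᵀ = 0 := by
    have hexp : A * (Y - X₀) + (Y - X₀) * Aᵀ
        = (A * Y + Y * Aᵀ) - (A * X₀ + X₀ * Aᵀ) := by noncomm_ring
    rw [hexp, hY, heq, sub_self]
  exact sub_eq_zero.mp (hzero (Y - X₀) hdiff)

end Main

end Lyap

theorem lyapunov_equation_unique_posDef_solution {n : ℕ}
    (A Q : Matrix (Fin n) (Fin n) ℝ)
    (hA : ∀ μ ∈ spectrum ℂ (A.map (algebraMap ℝ ℂ)), μ.re < 0)
    (hQ : (-Q).PosDef) :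
    (∃! X : Matrix (Fin n) (Fin n) ℝ, A * X + X * Aᵀ = Q) ∧
    ∀ X : Matrix (Fin n) (Fin n) ℝ, A * X + X * Aᵀ = Q →
      X.IsSymm ∧ X.PosDef ∧
      ∀ i j, X i j = ∫ t in Set.Ioi (0 : ℝ),
        (NormedSpace.exp (t • A) * (-Q) * NormedSpace.exp (t • Aᵀ)) i j := by
  rcases Nat.eq_zero_or_pos n with hn | hn
  · subst hn
    haveI : Subsingleton (Matrix (Fin 0) (Fin 0) ℝ) :=
      ⟨fun a b => by ext i j; exact i.elim0⟩
    constructor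
    · exact ⟨Q, Subsingleton.elim _ _, fun y _ => Subsingleton.elim _ _⟩
    · intro X _
      refine ⟨Subsingleton.elim _ _,
        Matrix.PosDef.of_dotProduct_mulVec_pos (Subsingleton.elim _ _) fun x hx => absurd (funext fun (i : Fin 0) => i.elim0) hx,
        fun i j => i.elim0⟩
  · obtain ⟨X₀, heq, hsymm, hpos, hentry, huniq⟩ := Lyap.main_aux hn A Q hA hQ
    constructor
    · exact ⟨X₀, heq, fun Y hY => huniq Y hY⟩
    · intro X hX
      obtain rfl := huniq X hX
      exact ⟨hsymm, hpos, hentry⟩
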